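/- Let d ≥ 1. For every y ∈ ℝ^d with |y| = 1 (Euclidean norm) and every multi-index α ∈ ℕ^d, the partial derivatives of the function u(t) = |t|^{-1} satisfy |∂^α(|·|^{-1})(y)| ≤ (4√d)^{|α|+1} · (α!). -/

import Mathlib

open scoped Nat

/-- Partial derivative in the `j`-th coordinate direction. -/
noncomputable def pd {d : ℕ} {A : Type*} [NormedAddCommGroup A] [NormedSpace ℝ A]
    (j : Fin d) (f : EuclideanSpace ℝ (Fin d) → A) : EuclideanSpace ℝ (Fin d) → A :=
  fun y => fderiv ℝ f y (EuclideanSpace.single j 1)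

/-- Iterated partial derivative `∂^α = ∂₁^{α₁} ⋯ ∂_d^{α_d}`. -/
noncomputable def mpd {d : ℕ} {A : Type*} [NormedAddCommGroup A] [NormedSpace ℝ A]
    (α : Fin d → ℕ) (f : EuclideanSpace ℝ (Fin d) → A) : EuclideanSpace ℝ (Fin d) → A :=
  (List.finRange d).foldr (fun j g => (pd j)^[α j] g) f

section St6work
open Metric Complex Function
open scoped Real
noncomputable section
namespace St6
variable {d : ℕ}

def qq (z : Fin d → ℂ) : ℂ := ∑ j, z j ^ 2

def UU (d : ℕ) : Set (Fin d → ℂ) := {z | 0 < (qq z).re}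

def FF (z : Fin d → ℂ) : ℂ := qq z ^ (-(1/2) : ℂ)

def cpd (j : Fin d) (G : (Fin d → ℂ) → ℂ) : (Fin d → ℂ) → ℂ :=
  fun z => fderiv ℂ G z (Pi.single j 1)

lemma isOpen_UU : IsOpen (UU d) := by
  have hq : Continuous (qq (d := d)) := by unfold qq; continuity
  exact isOpen_lt continuous_const (Complex.continuous_re.comp hq)

lemma analyticAt_qq (z : Fin d → ℂ) : AnalyticAt ℂ qq z := by
  unfold qq
  exact Finset.analyticAt_fun_sum _ fun j _ =>
    (((ContinuousLinearMap.proj j : (Fin d → ℂ) →L[ℂ] ℂ)).analyticAt z).pow 2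

lemma analyticOnNhd_FF : AnalyticOnNhd ℂ (FF (d := d)) (UU d) := by
  intro z hz
  have h1 : AnalyticAt ℂ (fun w : ℂ => w ^ (-(1/2) : ℂ)) (qq z) := by
    have hsl : Complex.slitPlane ∈ nhds (qq z) :=
      Complex.isOpen_slitPlane.mem_nhds (Or.inl hz)
    refine DifferentiableOn.analyticAt (fun w hw => ?_) hsl
    exact (differentiableAt_id.cpow (differentiableAt_const _) hw).differentiableWithinAt
  exact h1.comp (analyticAt_qq z)

lemma cpd_analytic {G : (Fin d → ℂ) → ℂ} (hG : AnalyticOnNhd ℂ G (UU d)) (j : Fin d) :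
    AnalyticOnNhd ℂ (cpd j G) (UU d) :=
  (ContinuousLinearMap.apply ℂ ℂ (Pi.single j 1 : Fin d → ℂ)).comp_analyticOnNhd hG.fderiv

lemma cpd_iterate_analytic {G : (Fin d → ℂ) → ℂ} (hG : AnalyticOnNhd ℂ G (UU d)) (j : Fin d)
    (m : ℕ) : AnalyticOnNhd ℂ ((cpd j)^[m] G) (UU d) := by
  induction m with
  | zero => exact hG
  | succ m ih => rw [Function.iterate_succ']; exact cpd_analytic ih j

lemma foldr_analytic (α : Fin d → ℕ) (l : List (Fin d)) :
    AnalyticOnNhd ℂ (l.foldr (fun j H => (cpd j)^[α j] H) FF) (UU d) := by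
  induction l with
  | nil => exact analyticOnNhd_FF
  | cons j t ih => exact cpd_iterate_analytic ih j (α j)

lemma update_eq (z : Fin d → ℂ) (j : Fin d) (w : ℂ) :
    Function.update z j w = z + (w - z j) • (Pi.single j 1 : Fin d → ℂ) := by
  funext i
  rcases eq_or_ne i j with rfl | h
  · simp
  · simp [Function.update_of_ne h, Pi.single_eq_of_ne h]

lemma slice_hasDerivAt {G : (Fin d → ℂ) → ℂ} {z : Fin d → ℂ}
    (hG : DifferentiableAt ℂ G z) (j : Fin d) :
    HasDerivAt (fun w => G (Function.update z j w)) (cpd j G z) (z j) := by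
  have hc : HasDerivAt (fun w : ℂ => z + (w - z j) • (Pi.single j 1 : Fin d → ℂ))
      (Pi.single j 1) (z j) := by
    have h1 : HasDerivAt (fun w : ℂ => w - z j) 1 (z j) := (hasDerivAt_id _).sub_const _
    simpa using (h1.smul_const (Pi.single j 1 : Fin d → ℂ)).const_add z
  have hz : z + ((z j) - z j) • (Pi.single j 1 : Fin d → ℂ) = z := by simp
  rw [← hz] at hG
  have := hG.hasFDerivAt.comp_hasDerivAt (z j) hc
  simp only [update_eq, hz] at this ⊢
  exact this

lemma slice_hasDerivAt' {G : (Fin d → ℂ) → ℂ} {z : Fin d → ℂ} (j : Fin d) (w₀ : ℂ)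
    (hG : DifferentiableAt ℂ G (Function.update z j w₀)) :
    HasDerivAt (fun w => G (Function.update z j w)) (cpd j G (Function.update z j w₀)) w₀ := by
  have := slice_hasDerivAt hG j
  simp only [Function.update_idem, Function.update_self] at this
  exact this

lemma continuous_update_slice (z : Fin d → ℂ) (j : Fin d) :
    Continuous (fun w : ℂ => Function.update z j w) := by
  simp only [update_eq]
  continuity

lemma iterate_slice {G : (Fin d → ℂ) → ℂ} (hG : AnalyticOnNhd ℂ G (UU d)) (j : Fin d) :
    ∀ (m : ℕ), ∀ z ∈ UU d,
      (cpd j)^[m] G z = deriv^[m] (fun w => G (Function.update z j w)) (z j) := by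
  intro m
  induction m with
  | zero => intro z _; simp
  | succ m ih =>
    intro z hz
    rw [Function.iterate_succ']
    have hWopen : IsOpen {w : ℂ | Function.update z j w ∈ UU d} :=
      isOpen_UU.preimage (continuous_update_slice z j)
    have hmem : z j ∈ {w : ℂ | Function.update z j w ∈ UU d} := by
      simp only [Set.mem_setOf_eq, Function.update_eq_self]; exact hz
    have heq : (fun w => (cpd j)^[m] G (Function.update z j w))
        =ᶠ[nhds (z j)] deriv^[m] (fun w => G (Function.update z j w)) := by
      filter_upwards [hWopen.mem_nhds hmem] with w hw
      have := ih (Function.update z j w) hw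
      simpa only [Function.update_idem, Function.update_self] using this
    have hd : DifferentiableAt ℂ ((cpd j)^[m] G) z :=
      ((cpd_iterate_analytic hG j m) z hz).differentiableAt
    have h1 : cpd j ((cpd j)^[m] G) z
        = deriv (fun w => (cpd j)^[m] G (Function.update z j w)) (z j) :=
      ((slice_hasDerivAt hd j).deriv).symm
    calc ((cpd j) ∘ (cpd j)^[m]) G z = cpd j ((cpd j)^[m] G) z := rfl
      _ = deriv (fun w => (cpd j)^[m] G (Function.update z j w)) (z j) := h1
      _ = deriv (deriv^[m] (fun w => G (Function.update z j w))) (z j) := heq.deriv_eq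
      _ = deriv^[m+1] (fun w => G (Function.update z j w)) (z j) := by
          rw [Function.iterate_succ']; rfl

section Estimates
variable {d : ℕ} (hd : 1 ≤ d) {y : EuclideanSpace ℝ (Fin d)} (hy : ‖y‖ = 1)

def rr (d : ℕ) : ℝ := 1 / (4 * Real.sqrt d)

def yh (y : EuclideanSpace ℝ (Fin d)) : Fin d → ℂ := fun j => ((y j : ℝ) : ℂ)

include hd in
lemma rr_pos : 0 < rr d := by
  have : (0:ℝ) < Real.sqrt d := Real.sqrt_pos.mpr (by exact_mod_cast hd)
  unfold rr; positivity

include hy in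
lemma sum_sq_y : ∑ i, (y i) ^ 2 = 1 := by
  have h := EuclideanSpace.norm_eq y
  rw [hy] at h
  have h2 : Real.sqrt (∑ i, ‖y i‖ ^ 2) = 1 := h.symm
  have h3 : ∑ i, ‖y i‖ ^ 2 = 1 := by
    have hnn : (0:ℝ) ≤ ∑ i, ‖y i‖ ^ 2 := Finset.sum_nonneg fun i _ => sq_nonneg ‖y i‖
    rw [← Real.sq_sqrt hnn, h2]; norm_num
  simpa [Real.norm_eq_abs, _root_.sq_abs] using h3

include hd hy in
lemma sum_abs_y : ∑ i, |y i| ≤ Real.sqrt d := by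
  have h1 : (∑ i, |y i|) ^ 2 ≤ (d : ℝ) * ∑ i, |y i| ^ 2 := by
    simpa using sq_sum_le_card_mul_sum_sq (s := (Finset.univ : Finset (Fin d))) (f := fun i => |y i|)
  rw [show (∑ i, |y i| ^ 2) = ∑ i, (y i)^2 by simp [_root_.sq_abs], sum_sq_y hy, mul_one] at h1
  have h2 : (0:ℝ) ≤ ∑ i, |y i| := Finset.sum_nonneg fun i _ => abs_nonneg _
  calc ∑ i, |y i| = Real.sqrt ((∑ i, |y i|)^2) := (Real.sqrt_sq h2).symm
    _ ≤ Real.sqrt d := Real.sqrt_le_sqrt h1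

include hy in
lemma qq_yh : qq (yh y) = 1 := by
  unfold qq yh
  have : (∑ i, ((y i : ℂ)) ^ 2) = ((∑ i, (y i)^2 : ℝ) : ℂ) := by push_cast; ring
  rw [this, sum_sq_y hy]; norm_num

include hd hy in
lemma qq_close {z : Fin d → ℂ} (hz : ∀ i, ‖z i - yh y i‖ ≤ rr d) :
    ‖qq z - 1‖ ≤ 9/16 := by
  have hρ := rr_pos hd
  have hsq : Real.sqrt d * Real.sqrt d = d := Real.mul_self_sqrt (Nat.cast_nonneg d)
  have hsd : (0:ℝ) < Real.sqrt d := Real.sqrt_pos.mpr (by exact_mod_cast hd)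
  have h0 : qq z - 1 = ∑ i, (z i - yh y i) * (z i + yh y i) := by
    rw [← qq_yh hy]
    unfold qq
    rw [← Finset.sum_sub_distrib]
    congr 1; funext i; ring
  rw [h0]
  have hterm : ∀ i, ‖(z i - yh y i) * (z i + yh y i)‖ ≤ rr d * (2 * |y i| + rr d) := by
    intro i
    rw [norm_mul]
    have h2 : ‖z i + yh y i‖ ≤ 2 * |y i| + rr d := by
      have : z i + yh y i = (z i - yh y i) + 2 * yh y i := by ring
      rw [this]
      refine (norm_add_le _ _).trans ?_
      have : ‖(2 : ℂ) * yh y i‖ = 2 * |y i| := by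
        simp [yh, Complex.norm_real, Real.norm_eq_abs]
      rw [this]
      linarith [hz i]
    exact mul_le_mul (hz i) h2 (norm_nonneg _) hρ.le
  refine (norm_sum_le _ _).trans ?_
  have hsum : ∑ i, rr d * (2 * |y i| + rr d) = 2 * rr d * (∑ i, |y i|) + d * rr d ^ 2 := by
    rw [Finset.sum_congr rfl (fun i _ => by ring : ∀ i ∈ Finset.univ,
      rr d * (2 * |y i| + rr d) = 2 * rr d * |y i| + rr d ^2)]
    rw [Finset.sum_add_distrib, ← Finset.mul_sum, Finset.sum_const]
    simp [mul_comm]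
  calc ∑ i, ‖(z i - yh y i) * (z i + yh y i)‖ ≤ ∑ i, rr d * (2 * |y i| + rr d) :=
        Finset.sum_le_sum fun i _ => hterm i
    _ = 2 * rr d * (∑ i, |y i|) + d * rr d ^ 2 := hsum
    _ ≤ 2 * rr d * Real.sqrt d + d * rr d ^ 2 := by
        have := sum_abs_y hd hy
        nlinarith [hρ]
    _ = 9/16 := by
        have hd0 : (0:ℝ) < d := by exact_mod_cast hd
        have e1 : 2 * rr d * Real.sqrt d = 1/2 := by
          unfold rr; field_simp; ring
        have e2 : (d:ℝ) * rr d ^ 2 = 1/16 := by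
          unfold rr
          rw [div_pow, one_pow, mul_pow]
          rw [show Real.sqrt d ^ 2 = (d:ℝ) by rw [sq]; exact hsq]
          field_simp
          ring
        rw [e1, e2]; norm_num
include hd hy in
lemma qq_lower {z : Fin d → ℂ} (hz : ∀ i, ‖z i - yh y i‖ ≤ rr d) :
    7/16 ≤ ‖qq z‖ ∧ z ∈ UU d := by
  have h := qq_close hd hy hz
  constructor
  · have h1 := norm_sub_norm_le (1:ℂ) (1 - qq z)
    rw [sub_sub_cancel, norm_one, norm_sub_rev] at h1
    linarith
  · show 0 < (qq z).re
    have h2 : |(qq z - 1).re| ≤ ‖qq z - 1‖ := Complex.abs_re_le_norm _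
    have h3 : (qq z).re = 1 + (qq z - 1).re := by simp
    rw [h3]
    have := abs_le.mp h2
    linarith

include hd hy in
lemma FF_bound {z : Fin d → ℂ} (hz : ∀ i, ‖z i - yh y i‖ ≤ rr d) :
    ‖FF z‖ ≤ 2 := by
  obtain ⟨h1, _⟩ := qq_lower hd hy hz
  unfold FF
  have he : (-(1/2) : ℂ) = ((-(1/2) : ℝ) : ℂ) := by norm_num
  rw [he]
  have h2 : ‖qq z ^ ((-(1/2) : ℝ) : ℂ)‖ = ‖qq z‖ ^ (-(1/2) : ℝ) := by
    simpa using Complex.norm_cpow_real (qq z) (-(1/2))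
  rw [h2]
  have h3 : ‖qq z‖ ^ (-(1/2) : ℝ) ≤ (7/16 : ℝ) ^ (-(1/2) : ℝ) :=
    Real.rpow_le_rpow_of_nonpos (by norm_num) h1 (by norm_num)
  refine h3.trans ?_
  have h4 : ((7/16 : ℝ) ^ (-(1/2) : ℝ)) ^ (2:ℕ) ≤ (2:ℝ) ^ (2:ℕ) := by
    rw [← Real.rpow_natCast ((7/16 : ℝ) ^ (-(1/2) : ℝ)) 2, ← Real.rpow_mul (by norm_num)]
    rw [show ((-(1/2) * (2:ℕ) : ℝ)) = -1 by push_cast; norm_num, Real.rpow_neg_one]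
    norm_num
  have h5 : (0:ℝ) ≤ (7/16 : ℝ) ^ (-(1/2) : ℝ) := Real.rpow_nonneg (by norm_num) _
  exact (pow_le_pow_iff_left₀ h5 (by norm_num) (by norm_num)).mp h4

lemma cauchy1D {g : ℂ → ℂ} {c : ℂ} {R M : ℝ} (hR : 0 < R)
    (hg : DifferentiableOn ℂ g (closedBall c R))
    (hM : ∀ w ∈ closedBall c R, ‖g w‖ ≤ M) (n : ℕ) :
    ‖iteratedDeriv n g c‖ ≤ (n ! : ℝ) * M / R ^ n := by
  lift R to NNReal using hR.le with R' hR'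
  have hR0 : (0:ℝ) < R' := hR
  have h := hg.hasFPowerSeriesOnBall hR0
  have key : (n ! : ℕ) • (cauchyPowerSeries g c R' n (fun _ => (1:ℂ)))
      = iteratedFDeriv ℂ n g c (fun _ => 1) := h.factorial_smul 1 n
  have h1 : iteratedDeriv n g c = iteratedFDeriv ℂ n g c (fun _ => 1) :=
    iteratedDeriv_eq_iteratedFDeriv
  have hcont : Continuous fun θ : ℝ => g (circleMap c R' θ) :=
    hg.continuousOn.comp_continuous (continuous_circleMap c R')
      (fun θ => circleMap_mem_closedBall c R'.2 θ)
  have hint : ∫ θ in (0:ℝ)..2*π, ‖g (circleMap c R' θ)‖ ≤ 2 * π * M := by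
    have := intervalIntegral.integral_mono_on (μ := MeasureTheory.volume)
      Real.two_pi_pos.le (hcont.norm.intervalIntegrable _ _)
      (intervalIntegrable_const (c := M))
      (fun θ _ => hM _ (circleMap_mem_closedBall c R'.2 θ))
    simpa [smul_eq_mul] using this
  have hnorm : ‖cauchyPowerSeries g c R' n‖ ≤ M * ((R':ℝ)⁻¹) ^ n := by
    refine (norm_cauchyPowerSeries_le g c R' n).trans ?_
    have habs : |(R':ℝ)| = R' := abs_of_nonneg R'.2
    rw [habs]
    have h2pi : (0:ℝ) < (2*π)⁻¹ := by positivity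
    have : (2*π)⁻¹ * ∫ θ in (0:ℝ)..2*π, ‖g (circleMap c R' θ)‖ ≤ (2*π)⁻¹ * (2*π*M) :=
      mul_le_mul_of_nonneg_left hint h2pi.le
    refine mul_le_mul_of_nonneg_right (this.trans (le_of_eq ?_)) (by positivity)
    field_simp
  have happ : ‖cauchyPowerSeries g c R' n (fun _ => (1:ℂ))‖ ≤ M * ((R':ℝ)⁻¹) ^ n := by
    refine le_trans (ContinuousMultilinearMap.le_opNorm _ _) ?_
    simpa using hnorm
  rw [h1, ← key, nsmul_eq_mul, norm_mul, Complex.norm_natCast]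
  calc (n ! : ℝ) * ‖cauchyPowerSeries g c R' n (fun _ => (1:ℂ))‖
      ≤ (n ! : ℝ) * (M * ((R':ℝ)⁻¹) ^ n) :=
        mul_le_mul_of_nonneg_left happ (by positivity)
    _ = (n ! : ℝ) * M / (R':ℝ) ^ n := by
        rw [inv_pow, mul_comm M, ← mul_assoc, div_eq_mul_inv]; ring

include hd hy in
lemma main_estimate (α : Fin d → ℕ) : ∀ (l : List (Fin d)), l.Nodup →
    ∀ z : Fin d → ℂ, (∀ i, ‖z i - yh y i‖ ≤ rr d) → (∀ i ∈ l, z i = yh y i) →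
    ‖l.foldr (fun j H => (cpd j)^[α j] H) FF z‖
      ≤ 2 * (l.map fun i => ((α i)! : ℝ) / rr d ^ (α i)).prod := by
  intro l
  induction l with
  | nil =>
    intro _ z hzPD _
    simpa using FF_bound hd hy hzPD
  | cons j t ih =>
    intro hnd z hzPD hzl
    have hρ := rr_pos hd
    obtain ⟨hjt, hndt⟩ := List.nodup_cons.mp hnd
    set H := t.foldr (fun j H => (cpd j)^[α j] H) FF with hH
    have hHa : AnalyticOnNhd ℂ H (UU d) := foldr_analytic α t
    have hzU : z ∈ UU d := (qq_lower hd hy hzPD).2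
    have hzj : z j = yh y j := hzl j (List.mem_cons_self (a := j) (l := t))
    -- polydisc membership of slice points
    have hPD' : ∀ w ∈ closedBall (z j) (rr d), ∀ i, ‖(Function.update z j w) i - yh y i‖ ≤ rr d := by
      intro w hw i
      rcases eq_or_ne i j with rfl | hij
      · rw [Function.update_self, ← hzj]
        simpa [dist_eq_norm] using hw
      · rw [Function.update_of_ne hij]; exact hzPD i
    set B : ℝ := 2 * (t.map fun i => ((α i)! : ℝ) / rr d ^ (α i)).prod with hB
    have hslice_bound : ∀ w ∈ closedBall (z j) (rr d), ‖H (Function.update z j w)‖ ≤ B := by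
      intro w hw
      refine ih hndt _ (hPD' w hw) ?_
      intro i hi
      have hij : i ≠ j := fun h => hjt (h ▸ hi)
      rw [Function.update_of_ne hij]
      exact hzl i (List.mem_cons_of_mem j hi)
    have hslice_diff : DifferentiableOn ℂ (fun w => H (Function.update z j w))
        (closedBall (z j) (rr d)) := by
      intro w hw
      have hmem : Function.update z j w ∈ UU d := (qq_lower hd hy (hPD' w hw)).2
      exact ((slice_hasDerivAt' j w ((hHa _ hmem).differentiableAt)).differentiableAt).differentiableWithinAt
    have hkey : (List.foldr (fun j H => (cpd j)^[α j] H) FF (j :: t)) z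
        = iteratedDeriv (α j) (fun w => H (Function.update z j w)) (z j) := by
      show ((cpd j)^[α j] H) z = _
      rw [iterate_slice hHa j (α j) z hzU, iteratedDeriv_eq_iterate]
    rw [hkey]
    have := cauchy1D hρ hslice_diff hslice_bound (α j)
    refine this.trans (le_of_eq ?_)
    rw [List.map_cons, List.prod_cons, hB]
    ring

end Estimates

section Bridge
variable {d : ℕ}

def incl (d : ℕ) : EuclideanSpace ℝ (Fin d) →L[ℝ] (Fin d → ℂ) :=
  ContinuousLinearMap.pi (fun j => Complex.ofRealCLM.comp
    ((EuclideanSpace.proj j : EuclideanSpace ℝ (Fin d) →L[ℝ] ℝ)))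

lemma incl_apply (x : EuclideanSpace ℝ (Fin d)) (j : Fin d) : incl d x j = ((x j : ℝ) : ℂ) := rfl

lemma incl_single (j : Fin d) :
    incl d (EuclideanSpace.single j (1:ℝ)) = (Pi.single j 1 : Fin d → ℂ) := by
  funext i
  rcases eq_or_ne i j with rfl | h
  · simp [incl_apply]
  · simp [incl_apply, EuclideanSpace.single_apply, Pi.single_eq_of_ne h, h]

lemma bridge_step {H : (Fin d → ℂ) → ℂ} (hH : AnalyticOnNhd ℂ H (UU d)) (j : Fin d)
    {x : EuclideanSpace ℝ (Fin d)} (hx : incl d x ∈ UU d) :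
    fderiv ℝ (fun t => (H (incl d t)).re) x (EuclideanSpace.single j 1)
      = (cpd j H (incl d x)).re := by
  have hdiff : DifferentiableAt ℂ H (incl d x) := (hH _ hx).differentiableAt
  have h2 : HasFDerivAt (fun t => H (incl d t))
      (((fderiv ℂ H (incl d x)).restrictScalars ℝ).comp (incl d)) x :=
    (hdiff.hasFDerivAt.restrictScalars ℝ).comp x (incl d).hasFDerivAt
  have h1 : HasFDerivAt (fun t => (H (incl d t)).re)
      (Complex.reCLM.comp ((((fderiv ℂ H (incl d x)).restrictScalars ℝ).comp (incl d)))) x :=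
    Complex.reCLM.hasFDerivAt.comp x h2
  rw [h1.fderiv]
  simp only [ContinuousLinearMap.coe_comp', Function.comp_apply, incl_single,
    ContinuousLinearMap.coe_restrictScalars']
  rfl

lemma isOpen_V : IsOpen {x : EuclideanSpace ℝ (Fin d) | incl d x ∈ UU d} :=
  isOpen_UU.preimage (incl d).continuous

lemma bridge_iter (j : Fin d) : ∀ (m : ℕ) (H : (Fin d → ℂ) → ℂ),
    AnalyticOnNhd ℂ H (UU d) →
    ∀ (g : EuclideanSpace ℝ (Fin d) → ℝ),
    (∀ x, incl d x ∈ UU d → g x = (H (incl d x)).re) →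
    ∀ x, incl d x ∈ UU d → (pd j)^[m] g x = (((cpd j)^[m] H) (incl d x)).re := by
  intro m
  induction m with
  | zero => intro H _ g hg x hx; exact hg x hx
  | succ m ih =>
    intro H hH g hg x hx
    rw [Function.iterate_succ', Function.iterate_succ']
    set H' := (cpd j)^[m] H with hH'def
    have hH' : AnalyticOnNhd ℂ H' (UU d) := cpd_iterate_analytic hH j m
    have heq : ((pd j)^[m] g) =ᶠ[nhds x] (fun t => (H' (incl d t)).re) := by
      filter_upwards [isOpen_V.mem_nhds hx] with t ht
      exact ih H hH g hg t ht
    show fderiv ℝ ((pd j)^[m] g) x (EuclideanSpace.single j 1) = (cpd j H' (incl d x)).re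
    rw [heq.fderiv_eq]
    exact bridge_step hH' j hx

lemma bridge_list (α : Fin d → ℕ) : ∀ (l : List (Fin d)),
    ∀ x, incl d x ∈ UU d →
    (l.foldr (fun j g => (pd j)^[α j] g) (fun t => ‖t‖⁻¹)) x
      = ((l.foldr (fun j H => (cpd j)^[α j] H) FF) (incl d x)).re := by
  intro l
  induction l with
  | nil =>
    intro x hx
    show ‖x‖⁻¹ = (FF (incl d x)).re
    have hq : qq (incl d x) = ((∑ i, x i ^ 2 : ℝ) : ℂ) := by
      unfold qq; push_cast; rfl
    have hr : (0:ℝ) < ∑ i, x i ^ 2 := by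
      have := hx
      simp only [UU, Set.mem_setOf_eq, hq, Complex.ofReal_re] at this
      exact this
    have hFF : FF (incl d x) = ((((∑ i, x i ^ 2 : ℝ)) ^ (-(1/2) : ℝ) : ℝ) : ℂ) := by
      unfold FF
      rw [hq, show (-(1/2) : ℂ) = ((-(1/2) : ℝ) : ℂ) by norm_num]
      exact (Complex.ofReal_cpow hr.le _).symm
    rw [hFF, Complex.ofReal_re]
    have hnorm : ‖x‖ = Real.sqrt (∑ i, x i ^ 2) := by
      rw [EuclideanSpace.norm_eq]
      congr 1
      exact Finset.sum_congr rfl fun i _ => by rw [Real.norm_eq_abs, _root_.sq_abs]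
    rw [hnorm, Real.sqrt_eq_rpow, Real.rpow_neg hr.le]
  | cons j t ih =>
    intro x hx
    exact bridge_iter j (α j) _ (foldr_analytic α t) _ ih x hx

end Bridge
end St6
end
end St6work

/-- For `|y| = 1` and every multi-index `α`, `|∂^α(|·|⁻¹)(y)| ≤ (4√d)^(|α|+1) · α!`. -/
theorem stmt_6 (d : ℕ) (hd : 1 ≤ d) (y : EuclideanSpace ℝ (Fin d)) (hy : ‖y‖ = 1)
    (α : Fin d → ℕ) :
    |mpd α (fun t => ‖t‖⁻¹) y| ≤
      (4 * Real.sqrt d) ^ (∑ i, α i + 1) * ∏ i, ((α i)! : ℝ) := by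
  classical
  have hsd : (1:ℝ) ≤ Real.sqrt d := by
    rw [show (1:ℝ) = Real.sqrt 1 by simp]
    exact Real.sqrt_le_sqrt (by exact_mod_cast hd)
  have hρ := St6.rr_pos hd
  have hincl : St6.incl d y = St6.yh y := by funext j; rfl
  have hyU : St6.incl d y ∈ St6.UU d := by
    rw [hincl]
    exact (St6.qq_lower hd hy (fun i => by simpa using hρ.le)).2
  have hbridge := St6.bridge_list α (List.finRange d) y hyU
  have hmpd : mpd α (fun t => ‖t‖⁻¹) y
      = (((List.finRange d).foldr (fun j H => (St6.cpd j)^[α j] H) St6.FF) (St6.yh y)).re := by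
    show ((List.finRange d).foldr (fun j g => (pd j)^[α j] g) (fun t => ‖t‖⁻¹)) y = _
    rw [hbridge, hincl]
  rw [hmpd]
  have hest := St6.main_estimate hd hy α (List.finRange d) (List.nodup_finRange d) (St6.yh y)
    (fun i => by simpa using hρ.le) (fun i _ => rfl)
  have habs : |(((List.finRange d).foldr (fun j H => (St6.cpd j)^[α j] H) St6.FF) (St6.yh y)).re|
      ≤ ‖((List.finRange d).foldr (fun j H => (St6.cpd j)^[α j] H) St6.FF) (St6.yh y)‖ :=
    Complex.abs_re_le_norm _
  refine (habs.trans hest).trans ?_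
  rw [show ((List.finRange d).map fun i => ((α i)! : ℝ) / St6.rr d ^ (α i)).prod
      = ∏ i, ((α i)! : ℝ) / St6.rr d ^ (α i) from (Fin.prod_univ_def _).symm]
  rw [Finset.prod_div_distrib, Finset.prod_pow_eq_pow_sum]
  have hinv : (St6.rr d)⁻¹ = 4 * Real.sqrt d := by
    unfold St6.rr; rw [one_div, inv_inv]
  have hP : (0:ℝ) ≤ ∏ i, ((α i)! : ℝ) :=
    Finset.prod_nonneg fun i _ => by positivity
  have h2 : (2:ℝ) ≤ 4 * Real.sqrt d := by nlinarith
  have hpow : (0:ℝ) < (4 * Real.sqrt d) ^ (∑ i, α i) := by positivity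
  rw [div_eq_mul_inv, ← inv_pow, hinv, pow_succ]
  calc 2 * ((∏ i, ((α i)! : ℝ)) * (4 * Real.sqrt d) ^ (∑ i, α i))
      ≤ (4 * Real.sqrt d) * ((∏ i, ((α i)! : ℝ)) * (4 * Real.sqrt d) ^ (∑ i, α i)) := by
        have := mul_nonneg hP hpow.le
        nlinarith
    _ = (4 * Real.sqrt d) ^ (∑ i, α i) * (4 * Real.sqrt d) * ∏ i, ((α i)! : ℝ) := by ring
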